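/- Let f : 𝔹 → ℍ be a function such that for every choice of three points z₁, z₂, z₃ ∈ 𝔹 the 3×3 Pick matrix P_f(z₁,z₂,z₃) is positive semidefinite. Let γ ∈ 𝔹 with Im(γ) ≠ 0, and set α = Re(γ) + |Im(γ)|·i (so α ∈ 𝔹 is conjugate to γ and has zero j- and k-components). Then f(γ) = (γ − star γ)⁻¹·(γ − star α)·f(α) + (γ − star γ)⁻¹·(γ − α)·f(star α). -/

import Mathlib

open Quaternion Filter Matrix

noncomputable section

/-- The imaginary unit `i` of the real quaternions. -/
def qi : ℍ := ⟨0, 1, 0, 0⟩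

/-- The imaginary unit `j` of the real quaternions. -/
def qj : ℍ := ⟨0, 0, 1, 0⟩

/-- The Pick matrix of `f : ℍ → ℍ` at the points `z 0, …, z (n-1)` of the unit ball:
its `(i,j)` entry is `∑ₖ (z i)^k (1 - f(z i) * star f(z j)) (star (z j))^k`. -/
def pickMatrix {n : ℕ} (f : ℍ → ℍ) (z : Fin n → ℍ) : Matrix (Fin n) (Fin n) ℍ :=
  Matrix.of fun i j => ∑' k : ℕ, z i ^ k * (1 - f (z i) * star (f (z j))) * (star (z j)) ^ k

/-- A quaternionic matrix is positive semidefinite if every quadratic form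
`∑ᵢⱼ star (v i) * P i j * v j` is a nonnegative real scalar quaternion. -/
def QPosSemidef {n : ℕ} (P : Matrix (Fin n) (Fin n) ℍ) : Prop :=
  ∀ v : Fin n → ℍ, ∃ r : ℝ, 0 ≤ r ∧ (∑ i, ∑ j, star (v i) * P i j * v j) = (r : ℍ)

/-- `f` is left-regular on the unit ball: it is given there by an (absolutely convergent)
power series with quaternionic coefficients on the right. -/
def LeftRegular (f : ℍ → ℍ) : Prop :=
  ∃ c : ℕ → ℍ,
    Filter.limsup (fun k : ℕ => ‖c k‖ ^ (1 / (k : ℝ))) Filter.atTop ≤ 1 ∧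
    ∀ α : ℍ, ‖α‖ < 1 → f α = ∑' k : ℕ, α ^ k * c k

/-- The `n × n` lower-triangular Toeplitz matrix built from a sequence. -/
def toeplitz {R : Type*} [Zero R] (n : ℕ) (g : ℕ → R) : Matrix (Fin n) (Fin n) R :=
  Matrix.of fun i j => if (j : ℕ) ≤ (i : ℕ) then g ((i : ℕ) - (j : ℕ)) else 0

@[simp] lemma qi_re : qi.re = 0 := rfl
@[simp] lemma qi_imI : qi.imI = 1 := rfl
@[simp] lemma qi_imJ : qi.imJ = 0 := rfl
@[simp] lemma qi_imK : qi.imK = 0 := rfl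

lemma qi_mul_qi : qi * qi = -1 := by
  ext <;> simp

lemma qi_star : star qi = -qi := by
  ext <;> simp

lemma key_a (A B : ℝ) (x : ℍ) :
    ((A:ℍ) + (B:ℍ) * (-x)) * ((2:ℝ):ℍ) + ((A:ℍ) + (B:ℍ) * (-qi)) * (-1 + qi * x)
      + ((A:ℍ) + (B:ℍ) * qi) * (-1 - qi * x) = 0 := by
  ext <;> simp <;> ring

lemma coe_lift (u : ℍ) (hu : u * u = -1) (w : ℂ) :
    Complex.liftAux u hu w = (w.re : ℍ) + (w.im : ℍ) * u := by
  rw [Complex.liftAux_apply, ← Quaternion.coe_mul_eq_smul]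
  simp [Quaternion.algebraMap_def]

lemma pow_lift (u : ℍ) (hu : u * u = -1) (w : ℂ) (k : ℕ) :
    ((w.re : ℍ) + (w.im : ℍ) * u) ^ k = (((w^k).re : ℍ)) + ((w^k).im : ℍ) * u := by
  rw [← coe_lift u hu, ← coe_lift u hu, ← map_pow]

lemma coe_factor (t : ℝ) (x q : ℍ) :
    ((2*t:ℝ):ℍ) * x * (((2⁻¹:ℝ):ℍ) * q) = ((t:ℝ):ℍ) * (x * q) := by
  rw [mul_assoc, ← mul_assoc x, ← Quaternion.coe_commutes, ← mul_assoc, ← mul_assoc,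
    ← Quaternion.coe_mul, show (2*t) * 2⁻¹ = t by ring, mul_assoc]

lemma key_c1 (t r : ℝ) (x y : ℍ) (hx : x * x = -1) :
    ((2*t:ℝ):ℍ) * x * (((2⁻¹:ℝ):ℍ) * (1 - x * y)) = ((r:ℝ):ℍ) + (t:ℍ) * x - (((r:ℝ):ℍ) + (t:ℍ) * -y) := by
  rw [coe_factor, mul_sub, mul_one, ← mul_assoc, hx, neg_one_mul, sub_neg_eq_add, mul_add, mul_neg]
  noncomm_ring

lemma key_c2 (t r : ℝ) (x y : ℍ) (hx : x * x = -1) :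
    ((2*t:ℝ):ℍ) * x * (((2⁻¹:ℝ):ℍ) * (1 + x * y)) = ((r:ℝ):ℍ) + (t:ℍ) * x - (((r:ℝ):ℍ) + (t:ℍ) * y) := by
  rw [coe_factor, mul_add, mul_one, ← mul_assoc, hx, neg_one_mul, mul_add, ← sub_sub]
  noncomm_ring

set_option maxHeartbeats 2000000 in
/-- Under positivity of all `3×3` Pick matrices, the value of `f` at a non-complex point `γ`
is determined by its values at the two complex points `α, star α` of the conjugacy class
of `γ`, where `α = Re γ + |Im γ|·i`. -/
theorem value_from_complex_slice (f : ℍ → ℍ)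
    (hpick : ∀ z : Fin 3 → ℍ, (∀ i, ‖z i‖ < 1) → QPosSemidef (pickMatrix f z))
    (γ : ℍ) (hγ : ‖γ‖ < 1) (him : γ.im ≠ 0)
    (α : ℍ) (hα : α = (γ.re : ℍ) + (‖γ.im‖ : ℍ) * qi) :
    f γ = (γ - star γ)⁻¹ * (γ - star α) * f α +
          (γ - star γ)⁻¹ * (γ - α) * f (star α) := by
  set s : ℝ := ‖γ.im‖ with hsdef
  have hs0 : (0:ℝ) < s := norm_pos_iff.mpr him
  have hsne : s ≠ 0 := ne_of_gt hs0
  have hsne' : (s : ℍ) ≠ 0 := by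
    simpa using Quaternion.coe_injective.ne_iff.mpr hsne
  set u : ℍ := ((s⁻¹ : ℝ) : ℍ) * γ.im with hudef
  have hsu : (s : ℍ) * u = γ.im := by
    rw [hudef, ← mul_assoc, ← Quaternion.coe_mul, mul_inv_cancel₀ hsne, Quaternion.coe_one, one_mul]
  have hstarim : star γ.im = -γ.im := by ext <;> simp
  have him2 : γ.im * γ.im = -((s^2 : ℝ) : ℍ) := by
    have h2 : star γ.im * γ.im = ((normSq γ.im : ℝ) : ℍ) := Quaternion.star_mul_self _
    rw [hstarim, neg_mul, neg_eq_iff_eq_neg] at h2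
    rw [h2, normSq_eq_norm_mul_self]
    norm_cast
    rw [sq]
  have hstaru : star u = -u := by
    rw [hudef, StarMul.star_mul, hstarim, Quaternion.star_coe, Quaternion.coe_commutes, neg_mul]
  have hu : u * u = -1 := by
    have hc : Commute γ.im (((s⁻¹:ℝ)):ℍ) := (Quaternion.coe_commutes _ _).symm
    rw [hudef, hc.mul_mul_mul_comm, him2, ← Quaternion.coe_mul, mul_neg,
      ← Quaternion.coe_mul, ← Quaternion.coe_neg]
    norm_cast
    rw [show s⁻¹ * s⁻¹ * s ^ 2 = 1 by field_simp]
    simp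
  have hnu : (-u) * (-u) = -1 := by rw [neg_mul_neg, hu]
  have hnqi : (-qi) * (-qi) = -1 := by rw [neg_mul_neg, qi_mul_qi]
  -- descriptions of the points
  have hγeq : γ = (γ.re : ℍ) + (s : ℍ) * u := by rw [hsu, Quaternion.re_add_im]
  have hstarγ : star γ = (γ.re : ℍ) + (s : ℍ) * (-u) := by
    have h1 : star γ = ((star γ).re : ℍ) + (star γ).im := (Quaternion.re_add_im _).symm
    rw [h1, Quaternion.re_star, Quaternion.im_star, ← hsu, mul_neg]
  have hstarα : star α = (γ.re : ℍ) + (s : ℍ) * (-qi) := by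
    rw [hα, star_add, StarMul.star_mul, qi_star, Quaternion.star_coe, Quaternion.star_coe,
      mul_neg, ← neg_mul, ← Quaternion.coe_commutes, neg_mul, mul_neg]
  -- norms
  have hkey : ∀ q : ℍ, Real.sqrt (normSq q) = ‖q‖ := fun q => by
    rw [normSq_eq_norm_mul_self, Real.sqrt_mul_self (norm_nonneg q)]
  have hαcomp : α = (⟨γ.re, s, 0, 0⟩ : ℍ) := by
    rw [hα]; ext <;> simp
  have hnormSqα : normSq α = normSq γ := by
    have hs2 : s ^ 2 = γ.imI ^ 2 + γ.imJ ^ 2 + γ.imK ^ 2 := by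
      have h5 : normSq γ.im = s * s := by rw [normSq_eq_norm_mul_self]
      rw [Quaternion.normSq_def'] at h5
      simp only [Quaternion.re_im, Quaternion.imI_im, Quaternion.imJ_im, Quaternion.imK_im] at h5
      rw [sq]
      nlinarith [h5]
    rw [hαcomp, Quaternion.normSq_def' (⟨γ.re, s, 0, 0⟩ : ℍ), Quaternion.normSq_def' γ]
    simp only [] -- components of mk are rfl
    show γ.re ^ 2 + s ^ 2 + 0 ^ 2 + 0 ^ 2 = _
    rw [hs2]; ring
  have hnα : ‖α‖ = ‖γ‖ := by rw [← hkey α, ← hkey γ, hnormSqα]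
  -- the three points and the test vector
  set z : Fin 3 → ℍ := ![γ, α, star α] with hzdef
  have hz0 : z 0 = γ := rfl
  have hz1 : z 1 = α := rfl
  have hz2 : z 2 = star α := rfl
  have hzlt : ∀ i, ‖z i‖ < 1 := by
    intro i
    fin_cases i
    · exact hγ
    · show ‖α‖ < 1; rw [hnα]; exact hγ
    · show ‖star α‖ < 1; rw [Quaternion.norm_star, hnα]; exact hγ
  have hznorm : ∀ i, ‖z i‖ = ‖γ‖ := by
    intro i; fin_cases i
    · rfl
    · exact hnα
    · show ‖star α‖ = ‖γ‖; rw [Quaternion.norm_star, hnα]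
  set v : Fin 3 → ℍ := ![((2:ℝ):ℍ), -1 + qi * u, -1 - qi * u] with hvdef
  have hv0 : v 0 = ((2:ℝ):ℍ) := rfl
  have hv1 : v 1 = -1 + qi * u := rfl
  have hv2 : v 2 = -1 - qi * u := rfl
  -- the complex number giving the common powers
  set w : ℂ := ⟨γ.re, s⟩ with hwdef
  have hwre : w.re = γ.re := rfl
  have hwim : w.im = s := rfl
  have hpγ : ∀ k, (star γ) ^ k = (((w^k).re : ℝ):ℍ) + (((w^k).im : ℝ):ℍ) * (-u) := by
    intro k
    rw [hstarγ, show ((γ.re:ℝ):ℍ) = ((w.re:ℝ):ℍ) from rfl, show ((s:ℝ):ℍ) = ((w.im:ℝ):ℍ) from rfl,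
      pow_lift (-u) hnu w k]
  have hpα : ∀ k, α ^ k = (((w^k).re : ℝ):ℍ) + (((w^k).im : ℝ):ℍ) * qi := by
    intro k
    rw [hα, show ((γ.re:ℝ):ℍ) = ((w.re:ℝ):ℍ) from rfl, show ((s:ℝ):ℍ) = ((w.im:ℝ):ℍ) from rfl,
      pow_lift qi qi_mul_qi w k]
  have hpsα : ∀ k, (star α) ^ k = (((w^k).re : ℝ):ℍ) + (((w^k).im : ℝ):ℍ) * (-qi) := by
    intro k
    rw [hstarα, show ((γ.re:ℝ):ℍ) = ((w.re:ℝ):ℍ) from rfl, show ((s:ℝ):ℍ) = ((w.im:ℝ):ℍ) from rfl,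
      pow_lift (-qi) hnqi w k]
  -- the annihilation identity
  have ha : ∀ k : ℕ, (∑ i, (star (z i)) ^ k * v i) = 0 := by
    intro k
    rw [Fin.sum_univ_three, hz0, hz1, hz2, hv0, hv1, hv2, star_star, hpγ k, hpsα k, hpα k]
    exact key_a _ _ u
  -- the b sequence
  set b : ℕ → ℍ := fun k => ∑ i, star (f (z i)) * (star (z i)) ^ k * v i with hbdef
  have hbnorm : ∀ k, ‖b k‖ ≤ (∑ i, ‖f (z i)‖ * ‖v i‖) * ‖γ‖ ^ k := by
    intro k
    calc ‖b k‖ ≤ ∑ i, ‖star (f (z i)) * (star (z i)) ^ k * v i‖ := norm_sum_le _ _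
    _ = ∑ i, ‖f (z i)‖ * ‖v i‖ * ‖γ‖ ^ k := by
        apply Finset.sum_congr rfl
        intro i _
        rw [norm_mul, norm_mul, Quaternion.norm_star, norm_pow, Quaternion.norm_star, hznorm i]
        ring
    _ = (∑ i, ‖f (z i)‖ * ‖v i‖) * ‖γ‖ ^ k := by rw [Finset.sum_mul]
  have hγ2 : ‖γ‖ ^ 2 < 1 := by nlinarith [norm_nonneg γ]
  have hγ2' : (0:ℝ) ≤ ‖γ‖ ^ 2 := by positivity
  have hbsum : Summable (fun k => normSq (b k)) := by
    have hle : ∀ k, normSq (b k) ≤ (∑ i, ‖f (z i)‖ * ‖v i‖) ^ 2 * (‖γ‖ ^ 2) ^ k := by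
      intro k
      rw [normSq_eq_norm_mul_self]
      have h1 := hbnorm k
      have h2 : (0:ℝ) ≤ ‖b k‖ := norm_nonneg _
      have h4 : (0:ℝ) ≤ ‖γ‖ ^ k := by positivity
      calc ‖b k‖ * ‖b k‖ ≤ ((∑ i, ‖f (z i)‖ * ‖v i‖) * ‖γ‖ ^ k) ^ 2 := by nlinarith
      _ = (∑ i, ‖f (z i)‖ * ‖v i‖) ^ 2 * (‖γ‖ ^ 2) ^ k := by
          rw [mul_pow, ← pow_mul, ← pow_mul']
    exact Summable.of_nonneg_of_le (fun k => normSq_nonneg) hle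
      ((summable_geometric_of_lt_one hγ2' hγ2).mul_left _)
  -- per-k identity
  have hterm : ∀ k : ℕ,
      (∑ i, ∑ j, star (v i) * (z i ^ k * (1 - f (z i) * star (f (z j))) * (star (z j)) ^ k) * v j)
        = -(((normSq (b k)) : ℝ) : ℍ) := by
    intro k
    have expand : ∀ i j : Fin 3,
        star (v i) * (z i ^ k * (1 - f (z i) * star (f (z j))) * (star (z j)) ^ k) * v j
          = star ((star (z i)) ^ k * v i) * ((star (z j)) ^ k * v j)
            - star (star (f (z i)) * (star (z i)) ^ k * v i)
              * (star (f (z j)) * (star (z j)) ^ k * v j) := by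
      intro i j
      simp only [StarMul.star_mul, star_pow, star_star]
      noncomm_ring
    calc (∑ i, ∑ j, star (v i) * (z i ^ k * (1 - f (z i) * star (f (z j))) * (star (z j)) ^ k) * v j)
        = ∑ i, ∑ j, (star ((star (z i)) ^ k * v i) * ((star (z j)) ^ k * v j)
            - star (star (f (z i)) * (star (z i)) ^ k * v i)
              * (star (f (z j)) * (star (z j)) ^ k * v j)) := by
          apply Finset.sum_congr rfl; intro i _; apply Finset.sum_congr rfl; intro j _
          exact expand i j
    _ = (∑ i, star ((star (z i)) ^ k * v i)) * (∑ j, ((star (z j)) ^ k * v j))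
          - (∑ i, star (star (f (z i)) * (star (z i)) ^ k * v i))
            * (∑ j, star (f (z j)) * (star (z j)) ^ k * v j) := by
          rw [Finset.sum_mul_sum, Finset.sum_mul_sum, ← Finset.sum_sub_distrib]
          apply Finset.sum_congr rfl; intro i _
          rw [← Finset.sum_sub_distrib]
    _ = -(((normSq (b k)) : ℝ) : ℍ) := by
          rw [← star_sum, ← star_sum, ha k, star_zero, zero_mul, zero_sub]
          exact congrArg Neg.neg (Quaternion.star_mul_self (b k))
  -- summability of the entry series
  have hgsum : ∀ i j : Fin 3, Summable (fun k =>
      star (v i) * (z i ^ k * (1 - f (z i) * star (f (z j))) * (star (z j)) ^ k) * v j) := by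
    intro i j
    apply Summable.of_norm_bounded
      (g := fun k => (‖v i‖ * ‖1 - f (z i) * star (f (z j))‖ * ‖v j‖) * (‖γ‖^2) ^ k)
      ((summable_geometric_of_lt_one hγ2' hγ2).mul_left _)
    intro k
    apply le_of_eq
    rw [norm_mul, norm_mul, norm_mul, norm_mul, Quaternion.norm_star, norm_pow, norm_pow,
      Quaternion.norm_star, hznorm i, hznorm j]
    ring
  obtain ⟨r, hr0, hr⟩ := hpick z hzlt v
  have hQ : (∑ i, ∑ j, star (v i) * pickMatrix f z i j * v j)
      = ∑' k : ℕ, -(((normSq (b k)) : ℝ) : ℍ) := by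
    have h1 : ∀ i j, star (v i) * pickMatrix f z i j * v j
        = ∑' k : ℕ, star (v i) * (z i ^ k * (1 - f (z i) * star (f (z j))) * (star (z j)) ^ k) * v j := by
      intro i j
      show star (v i) * (∑' k : ℕ, z i ^ k * (1 - f (z i) * star (f (z j))) * (star (z j)) ^ k) * v j = _
      rw [← tsum_mul_left, ← tsum_mul_right]
    calc (∑ i, ∑ j, star (v i) * pickMatrix f z i j * v j)
        = ∑ i, ∑ j, ∑' k : ℕ, star (v i) * (z i ^ k * (1 - f (z i) * star (f (z j))) * (star (z j)) ^ k) * v j :=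
          Finset.sum_congr rfl (fun i _ => Finset.sum_congr rfl (fun j _ => h1 i j))
      _ = ∑ i, ∑' k : ℕ, ∑ j, star (v i) * (z i ^ k * (1 - f (z i) * star (f (z j))) * (star (z j)) ^ k) * v j :=
          Finset.sum_congr rfl (fun i _ => (Summable.tsum_finsetSum (fun j _ => hgsum i j)).symm)
      _ = ∑' k : ℕ, ∑ i, ∑ j, star (v i) * (z i ^ k * (1 - f (z i) * star (f (z j))) * (star (z j)) ^ k) * v j :=
          (Summable.tsum_finsetSum (fun i _ => summable_sum (fun j _ => hgsum i j))).symm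
      _ = ∑' k : ℕ, -(((normSq (b k)) : ℝ) : ℍ) := tsum_congr hterm
  have hcoe : (∑' k : ℕ, -(((normSq (b k)) : ℝ) : ℍ)) = ((-(∑' k : ℕ, normSq (b k)) : ℝ) : ℍ) := by
    rw [tsum_neg, Quaternion.coe_neg]
    congr 1
    have h2 := (hbsum.hasSum.map (algebraMap ℝ ℍ) (continuous_algebraMap ℝ ℍ)).tsum_eq
    simpa [Quaternion.algebraMap_def, Function.comp] using h2
  have hrT : r = -(∑' k : ℕ, normSq (b k)) :=
    Quaternion.coe_injective (hr.symm.trans (hQ.trans hcoe))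
  have hT0 : (0:ℝ) ≤ ∑' k : ℕ, normSq (b k) := tsum_nonneg (fun k => normSq_nonneg)
  have hTz : (∑' k : ℕ, normSq (b k)) = 0 := by linarith [hrT ▸ hr0]
  have hb0 : b 0 = 0 := by
    rw [← Quaternion.normSq_eq_zero]
    have hle := Summable.le_tsum hbsum 0 (fun j _ => normSq_nonneg)
    have := normSq_nonneg (a := b 0)
    linarith [hTz ▸ hle]
  -- extract the linear relation
  have hb0' : star (f γ) * ((2:ℝ):ℍ) + (star (f α) * (-1 + qi * u) + star (f (star α)) * (-1 - qi * u)) = 0 := by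
    have h3 : (∑ i, star (f (z i)) * (star (z i)) ^ 0 * v i) = 0 := hb0
    rw [Fin.sum_univ_three, hz0, hz1, hz2, hv0, hv1, hv2] at h3
    simpa [pow_zero, mul_one, add_assoc] using h3
  have hstar0 : ((2:ℝ):ℍ) * f γ + ((-1 + u * qi) * f α + (-1 - u * qi) * f (star α)) = 0 := by
    have h4 := congrArg star hb0'
    simp only [star_add, StarMul.star_mul, star_zero, star_star, Quaternion.star_coe,
      star_neg, star_one, star_sub, hstaru, qi_star, neg_mul_neg] at h4
    convert h4 using 3
  have hfγ : f γ = ((2⁻¹:ℝ):ℍ) * ((1 - u * qi) * f α + (1 + u * qi) * f (star α)) := by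
    have h5 : ((2:ℝ):ℍ) * f γ = -((-1 + u * qi) * f α + (-1 - u * qi) * f (star α)) :=
      eq_neg_of_add_eq_zero_left hstar0
    have h6 : -((-1 + u * qi) * f α + (-1 - u * qi) * f (star α))
        = (1 - u * qi) * f α + (1 + u * qi) * f (star α) := by noncomm_ring
    rw [← h6, ← h5, ← mul_assoc, ← Quaternion.coe_mul]
    norm_num
  -- the coefficients
  have hune : u ≠ 0 := by
    intro h
    apply him
    rw [← hsu, h, mul_zero]
  have hγsγ : γ - star γ = ((2*s:ℝ):ℍ) * u := by
    calc γ - star γ = (↑γ.re + (s:ℍ) * u) - (↑γ.re + (s:ℍ) * -u) := by rw [← hγeq, ← hstarγ]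
    _ = ((2*s:ℝ):ℍ) * u := by
        rw [Quaternion.coe_mul, mul_assoc, show ((2:ℝ):ℍ) = (2:ℍ) by norm_cast, two_mul]
        noncomm_ring
  have hne : γ - star γ ≠ 0 := by
    rw [hγsγ]
    apply mul_ne_zero _ hune
    simpa using Quaternion.coe_injective.ne_iff.mpr (by positivity : (2*s:ℝ) ≠ 0)
  have hC1 : (γ - star γ)⁻¹ * (γ - star α) = ((2⁻¹:ℝ):ℍ) * (1 - u * qi) := by
    rw [eq_comm, eq_inv_mul_iff_mul_eq₀ hne, hγsγ, hγeq, hstarα]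
    exact key_c1 s γ.re u qi hu
  have hC2 : (γ - star γ)⁻¹ * (γ - α) = ((2⁻¹:ℝ):ℍ) * (1 + u * qi) := by
    rw [eq_comm, eq_inv_mul_iff_mul_eq₀ hne, hγsγ, hγeq, hα]
    exact key_c2 s γ.re u qi hu
  rw [hC1, hC2, hfγ]
  noncomm_ring
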